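/- Let b_1, …, b_n be linearly independent vectors in ℝ^n, let δ ∈ (1/4, 1), and suppose ‖b_{i+1}^* + μ_{i+1,i}·b_i^*‖² < δ·‖b_i^*‖² for some index i, where μ_{i+1,i} = ⟨b_{i+1}, b_i^*⟩/⟨b_i^*, b_i^*⟩. Let b'_1, …, b'_n be obtained by swapping b_i and b_{i+1}. Then φ(B') < √δ · φ(B), where φ(B) = ∏_{i=1}^n ∏_{j=1}^i ‖b_j^*‖ is the potential of the basis. -/

import Mathlib

open Finset Submodule

local notation "⟪" x ", " y "⟫" => @inner ℝ _ _ x y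

private lemma orthogonalProjection_singleton {𝕜 F : Type*} [RCLike 𝕜] [NormedAddCommGroup F]
    [InnerProductSpace 𝕜 F] {v : F} (w : F) :
    ((𝕜 ∙ v).orthogonalProjection w : F) = (inner 𝕜 v w / ((‖v‖ ^ 2 : ℝ) : 𝕜)) • v := by
  rw [← Submodule.starProjection_apply]; exact Submodule.starProjection_singleton 𝕜 w

section Helpers

variable {E : Type*} [NormedAddCommGroup E] [InnerProductSpace ℝ E]

private lemma inner_self_pos' (u : E) (hu : u ≠ 0) : (0:ℝ) < ⟪u, u⟫ := by
  rw [real_inner_self_eq_norm_sq]; exact pow_pos (norm_pos_iff.mpr hu) 2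

private lemma inner_vv (u w : E) (μ : ℝ) (huw : ⟪u, w⟫ = 0) :
    ⟪w + μ • u, w + μ • u⟫ = ⟪w, w⟫ + μ^2 * ⟪u, u⟫ := by
  have huw' : ⟪w, u⟫ = 0 := by rw [real_inner_comm]; exact huw
  simp only [inner_add_left, inner_add_right, real_inner_smul_left, real_inner_smul_right, huw, huw']
  ring

private lemma inner_vx (u w x : E) (μ : ℝ) :
    ⟪w + μ • u, x⟫ = ⟪w, x⟫ + μ * ⟪u, x⟫ := by
  simp [inner_add_left, real_inner_smul_left]

private lemma inner_zz (u w : E) (μ : ℝ) (huw : ⟪u, w⟫ = 0) (hu : u ≠ 0) (hw : w ≠ 0) :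
    ⟪u - ((μ * ⟪u,u⟫) / ⟪w + μ • u, w + μ • u⟫) • (w + μ • u),
     u - ((μ * ⟪u,u⟫) / ⟪w + μ • u, w + μ • u⟫) • (w + μ • u)⟫
    = ⟪u,u⟫ * ⟪w,w⟫ / (⟪w,w⟫ + μ^2 * ⟪u,u⟫) := by
  have huw' : ⟪w, u⟫ = 0 := by rw [real_inner_comm]; exact huw
  have hA : (0:ℝ) < ⟪u,u⟫ := inner_self_pos' u hu
  have hB : (0:ℝ) < ⟪w,w⟫ := inner_self_pos' w hw
  have hD : (0:ℝ) < ⟪w,w⟫ + μ^2 * ⟪u,u⟫ := by positivity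
  rw [inner_vv u w μ huw]
  simp only [inner_sub_left, inner_sub_right, real_inner_smul_left, real_inner_smul_right,
    inner_add_left, inner_add_right, huw, huw']
  field_simp
  ring

private lemma proj_pair (u w x : E) (μ : ℝ) (huw : ⟪u, w⟫ = 0) (hu : u ≠ 0) (hw : w ≠ 0) :
    (↑(orthogonalProjection (ℝ ∙ (w + μ • u)) x) : E)
      + ↑(orthogonalProjection (ℝ ∙ (u - ((μ * ⟪u,u⟫) / ⟪w + μ • u, w + μ • u⟫) • (w + μ • u))) x)
    = (↑(orthogonalProjection (ℝ ∙ u) x) : E) + ↑(orthogonalProjection (ℝ ∙ w) x) := by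
  have huw' : ⟪w, u⟫ = 0 := by rw [real_inner_comm]; exact huw
  have hA : (0:ℝ) < ⟪u,u⟫ := inner_self_pos' u hu
  have hB : (0:ℝ) < ⟪w,w⟫ := inner_self_pos' w hw
  have hD : (0:ℝ) < ⟪w,w⟫ + μ^2 * ⟪u,u⟫ := by positivity
  rw [orthogonalProjection_singleton, orthogonalProjection_singleton,
    orthogonalProjection_singleton, orthogonalProjection_singleton]
  simp only [← real_inner_self_eq_norm_sq, RCLike.ofReal_real_eq_id, id_eq]
  rw [inner_zz u w μ huw hu hw]
  rw [show ⟪u - ((μ * ⟪u,u⟫) / ⟪w + μ • u, w + μ • u⟫) • (w + μ • u), x⟫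
      = ⟪u,x⟫ - ((μ * ⟪u,u⟫) / (⟪w,w⟫ + μ^2*⟪u,u⟫)) * (⟪w,x⟫ + μ*⟪u,x⟫) by
    rw [inner_sub_left, real_inner_smul_left, inner_vv u w μ huw, inner_vx]]
  rw [inner_vv u w μ huw, inner_vx u w x μ]
  match_scalars <;> field_simp <;> ring

private lemma norm_prod_swap (u w : E) (μ : ℝ) (huw : ⟪u, w⟫ = 0) (hu : u ≠ 0) (hw : w ≠ 0) :
    ‖w + μ • u‖ * ‖u - ((μ * ⟪u,u⟫) / ⟪w + μ • u, w + μ • u⟫) • (w + μ • u)‖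
      = ‖u‖ * ‖w‖ := by
  have hA : (0:ℝ) < ⟪u,u⟫ := inner_self_pos' u hu
  have hB : (0:ℝ) < ⟪w,w⟫ := inner_self_pos' w hw
  have hD : (0:ℝ) < ⟪w,w⟫ + μ^2 * ⟪u,u⟫ := by positivity
  have h2 : (‖w + μ • u‖ * ‖u - ((μ * ⟪u,u⟫) / ⟪w + μ • u, w + μ • u⟫) • (w + μ • u)‖)^2
      = (‖u‖ * ‖w‖)^2 := by
    rw [mul_pow, mul_pow, ← real_inner_self_eq_norm_sq, ← real_inner_self_eq_norm_sq,
      ← real_inner_self_eq_norm_sq, ← real_inner_self_eq_norm_sq,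
      inner_zz u w μ huw hu hw, inner_vv u w μ huw]
    field_simp
  have h3 := congrArg Real.sqrt h2
  rwa [Real.sqrt_sq (by positivity), Real.sqrt_sq (by positivity)] at h3

end Helpers

/-- The Gram–Schmidt orthogonalization of a finite family of vectors in `ℝ^n`. -/
noncomputable def gramSchmidtVecs {n m : ℕ} (b : Fin m → EuclideanSpace ℝ (Fin n)) :
    Fin m → EuclideanSpace ℝ (Fin n) :=
  @InnerProductSpace.gramSchmidt ℝ (EuclideanSpace ℝ (Fin n)) _ _ _ (Fin m) _ _
    (inferInstance : WellFoundedLT (Fin m)) b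

private lemma gsv_def {n m : ℕ} (b : Fin m → EuclideanSpace ℝ (Fin n)) (k : Fin m) :
    gramSchmidtVecs b k = b k - ∑ j ∈ Finset.Iio k,
      (orthogonalProjection (ℝ ∙ (gramSchmidtVecs b j)) (b k) : EuclideanSpace ℝ (Fin n)) :=
  @InnerProductSpace.gramSchmidt_def ℝ _ _ _ _ (Fin m) _ _ (inferInstance : WellFoundedLT (Fin m)) b k

private lemma gsv_ne_zero {n m : ℕ} {b : Fin m → EuclideanSpace ℝ (Fin n)}
    (hb : LinearIndependent ℝ b) (k : Fin m) : gramSchmidtVecs b k ≠ 0 :=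
  @InnerProductSpace.gramSchmidt_ne_zero ℝ _ _ _ _ (Fin m) _ _ (inferInstance : WellFoundedLT (Fin m)) b k hb

private lemma gsv_orthogonal {n m : ℕ} (b : Fin m → EuclideanSpace ℝ (Fin n))
    {j k : Fin m} (h : j ≠ k) : ⟪gramSchmidtVecs b j, gramSchmidtVecs b k⟫ = 0 :=
  @InnerProductSpace.gramSchmidt_orthogonal ℝ _ _ _ _ (Fin m) _ _ (inferInstance : WellFoundedLT (Fin m)) b j k h

private lemma gsv_inv_triangular {n m : ℕ} (b : Fin m → EuclideanSpace ℝ (Fin n))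
    {j k : Fin m} (h : j < k) : ⟪gramSchmidtVecs b k, b j⟫ = 0 :=
  @InnerProductSpace.gramSchmidt_inv_triangular ℝ _ _ _ _ (Fin m) _ _ (inferInstance : WellFoundedLT (Fin m)) b j k h

private lemma gsv_inner_self {n m : ℕ} (b : Fin m → EuclideanSpace ℝ (Fin n)) (k : Fin m) :
    ⟪gramSchmidtVecs b k, b k⟫ = ⟪gramSchmidtVecs b k, gramSchmidtVecs b k⟫ := by
  conv_lhs => rw [show (b k) = gramSchmidtVecs b k + ∑ j ∈ Finset.Iio k,
      (orthogonalProjection (ℝ ∙ (gramSchmidtVecs b j)) (b k) : EuclideanSpace ℝ (Fin n)) by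
    rw [gsv_def b k]; abel]
  rw [inner_add_right, inner_sum]
  rw [Finset.sum_eq_zero, add_zero]
  intro j hj
  rw [orthogonalProjection_singleton, real_inner_smul_right,
    gsv_orthogonal b (ne_of_gt (Finset.mem_Iio.mp hj)), mul_zero]

/-- The potential of a basis: `φ(B) = ∏_{i=1}^n ∏_{j=1}^i ‖bⱼ*‖`. -/
noncomputable def basisPotential {n : ℕ} (b : Fin n → EuclideanSpace ℝ (Fin n)) : ℝ :=
  ∏ i : Fin n, ∏ j ∈ Finset.Iic i, ‖gramSchmidtVecs b j‖

/-- If the Lovász condition fails at index `i` (with parameter `δ ∈ (1/4, 1)`), then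
swapping `bᵢ` and `bᵢ₊₁` decreases the potential of the basis by a factor
of more than `√δ`. -/
theorem potential_decrease_of_swap (n : ℕ)
    (b : Fin n → EuclideanSpace ℝ (Fin n)) (hb : LinearIndependent ℝ b)
    (δ : ℝ) (hδ : 1 / 4 < δ ∧ δ < 1)
    (i : Fin n) (hi : (i : ℕ) + 1 < n)
    (hlovasz : ‖gramSchmidtVecs b ⟨(i : ℕ) + 1, hi⟩ +
        ((inner ℝ (b ⟨(i : ℕ) + 1, hi⟩) (gramSchmidtVecs b i) : ℝ) /
          (inner ℝ (gramSchmidtVecs b i) (gramSchmidtVecs b i) : ℝ)) • gramSchmidtVecs b i‖ ^ 2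
        < δ * ‖gramSchmidtVecs b i‖ ^ 2)
    (b' : Fin n → EuclideanSpace ℝ (Fin n))
    (hb' : b' = b ∘ Equiv.swap i ⟨(i : ℕ) + 1, hi⟩) :
    basisPotential b' < Real.sqrt δ * basisPotential b := by
  set i1 : Fin n := ⟨(i : ℕ) + 1, hi⟩ with hi1def
  have hii1 : i < i1 := by simp [Fin.lt_def, hi1def]
  have hne : i ≠ i1 := ne_of_lt hii1
  set u : EuclideanSpace ℝ (Fin n) := gramSchmidtVecs b i with hu_def
  set w : EuclideanSpace ℝ (Fin n) := gramSchmidtVecs b i1 with hw_def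
  set μ : ℝ := ⟪b i1, u⟫ / ⟪u, u⟫ with hμ_def
  set v : EuclideanSpace ℝ (Fin n) := w + μ • u with hv_def
  set z : EuclideanSpace ℝ (Fin n) := u - ((μ * ⟪u,u⟫) / ⟪v, v⟫) • v with hz_def
  have hu : u ≠ 0 := gsv_ne_zero hb i
  have hw : w ≠ 0 := gsv_ne_zero hb i1
  have huw : ⟪u, w⟫ = 0 := gsv_orthogonal b hne
  have hb'i : b' i = b i1 := by rw [hb']; simp
  have hb'i1 : b' i1 = b i := by rw [hb']; simp
  have hbval : ∀ k, k ≠ i → k ≠ i1 → b' k = b k := by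
    intro k h1 h2; rw [hb']; simp [Equiv.swap_apply_of_ne_of_ne h1 h2]
  have hIio1 : (Finset.Iio i1 : Finset (Fin n)) = insert i (Finset.Iio i) := by
    rw [Finset.Iio_insert]
    ext j
    simp only [Finset.mem_Iio, Finset.mem_Iic, Fin.lt_def, Fin.le_def, hi1def]
    omega
  have hgs : ∀ k : Fin n, gramSchmidtVecs b' k =
      if k = i then v else if k = i1 then z else gramSchmidtVecs b k := by
    intro k
    induction k using WellFoundedLT.induction with
    | _ k ih =>
      by_cases hki : k = i
      · subst hki
        rw [if_pos rfl]
        rw [gsv_def b' k, hb'i]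
        rw [show (∑ j ∈ Finset.Iio k, (orthogonalProjection (ℝ ∙ (gramSchmidtVecs b' j)) (b i1) :
              EuclideanSpace ℝ (Fin n)))
            = ∑ j ∈ Finset.Iio k, (orthogonalProjection (ℝ ∙ (gramSchmidtVecs b j)) (b i1) :
              EuclideanSpace ℝ (Fin n)) from
          Finset.sum_congr rfl fun j hj => by
            have hj' : j < k := Finset.mem_Iio.mp hj
            rw [ih j hj', if_neg (ne_of_lt hj'), if_neg (ne_of_lt (hj'.trans hii1))]]
        have h1 := gsv_def b i1
        rw [hIio1, Finset.sum_insert (by simp)] at h1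
        have h2 : (orthogonalProjection (ℝ ∙ (gramSchmidtVecs b k)) (b i1) :
            EuclideanSpace ℝ (Fin n)) = μ • u := by
          rw [orthogonalProjection_singleton]
          simp only [RCLike.ofReal_real_eq_id, id_eq]
          rw [← hu_def, ← real_inner_self_eq_norm_sq, hμ_def, real_inner_comm (b i1) u]
        rw [h2] at h1
        rw [← hw_def] at h1
        rw [hv_def, h1]
        abel
      · by_cases hki1 : k = i1
        · rw [hki1] at ih
          rw [if_neg hki, if_pos hki1, hki1]
          rw [gsv_def b' i1, hb'i1, hIio1, Finset.sum_insert (by simp)]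
          rw [ih i hii1, if_pos rfl]
          rw [show (∑ j ∈ Finset.Iio i, (orthogonalProjection (ℝ ∙ (gramSchmidtVecs b' j)) (b i) :
                EuclideanSpace ℝ (Fin n)))
              = ∑ j ∈ Finset.Iio i, (orthogonalProjection (ℝ ∙ (gramSchmidtVecs b j)) (b i) :
                EuclideanSpace ℝ (Fin n)) from
            Finset.sum_congr rfl fun j hj => by
              have hj' : j < i := Finset.mem_Iio.mp hj
              rw [ih j (hj'.trans hii1), if_neg (ne_of_lt hj'),
                if_neg (ne_of_lt (hj'.trans hii1))]]
          have hS : (∑ j ∈ Finset.Iio i, (orthogonalProjection (ℝ ∙ (gramSchmidtVecs b j)) (b i) :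
              EuclideanSpace ℝ (Fin n))) = b i - u := by
            rw [hu_def, gsv_def b i]; abel
          have h2 : (orthogonalProjection (ℝ ∙ v) (b i) : EuclideanSpace ℝ (Fin n))
              = ((μ * ⟪u,u⟫) / ⟪v, v⟫) • v := by
            rw [orthogonalProjection_singleton]
            simp only [RCLike.ofReal_real_eq_id, id_eq]
            rw [← real_inner_self_eq_norm_sq]
            have hvb : ⟪v, b i⟫ = μ * ⟪u, u⟫ := by
              rw [hv_def, inner_vx, hw_def, gsv_inv_triangular b hii1, hu_def,
                gsv_inner_self b i]
              try ring
            rw [hvb]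
          rw [hS, h2, hz_def]
          abel
        · rw [if_neg hki, if_neg hki1]
          have hk1 : (k:ℕ) ≠ (i:ℕ) := fun h => hki (Fin.ext h)
          have hk2 : (k:ℕ) ≠ (i:ℕ) + 1 := fun h => hki1 (Fin.ext (by rw [h]; try simp [hi1def]))
          have hcase : k < i ∨ i1 < k := by
            simp only [Fin.lt_def, hi1def]
            omega
          rw [gsv_def b' k, gsv_def b k, hbval k hki hki1]
          congr 1
          rcases hcase with h|h
          · exact Finset.sum_congr rfl fun j hj => by
              have hj' : j < k := Finset.mem_Iio.mp hj
              rw [ih j hj', if_neg (ne_of_lt (hj'.trans h)),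
                if_neg (ne_of_lt ((hj'.trans h).trans hii1))]
          · have hmi : i ∈ Finset.Iio k := Finset.mem_Iio.mpr (hii1.trans h)
            have hmi1 : i1 ∈ (Finset.Iio k).erase i :=
              Finset.mem_erase.mpr ⟨hne.symm, Finset.mem_Iio.mpr h⟩
            have hsplit : ∀ (F : Fin n → EuclideanSpace ℝ (Fin n)),
                ∑ j ∈ Finset.Iio k, F j
                  = (F i + F i1) + ∑ j ∈ ((Finset.Iio k).erase i).erase i1, F j := by
              intro F
              rw [add_assoc, Finset.add_sum_erase _ F hmi1, Finset.add_sum_erase _ F hmi]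
            rw [hsplit, hsplit]
            congr 1
            · rw [ih i (hii1.trans h), if_pos rfl, ih i1 h, if_neg hne.symm, if_pos rfl]
              rw [hz_def, hv_def, ← hu_def, ← hw_def]
              exact proj_pair u w (b k) μ huw hu hw
            · exact Finset.sum_congr rfl fun j hj => by
                obtain ⟨hj1, hj2, hj3⟩ := by
                  simpa [Finset.mem_erase] using hj
                rw [ih j hj3, if_neg hj2, if_neg hj1]
  -- norm consequences
  have hnorm_i : ‖gramSchmidtVecs b' i‖ = ‖v‖ := by rw [hgs i, if_pos rfl]
  have hnorm_pair : ‖gramSchmidtVecs b' i‖ * ‖gramSchmidtVecs b' i1‖ = ‖u‖ * ‖w‖ := by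
    rw [hgs i, if_pos rfl, hgs i1, if_neg hne.symm, if_pos rfl, hz_def, hv_def]
    exact norm_prod_swap u w μ huw hu hw
  have hnorm_other : ∀ j, j ≠ i → j ≠ i1 →
      ‖gramSchmidtVecs b' j‖ = ‖gramSchmidtVecs b j‖ := by
    intro j h1 h2; rw [hgs j, if_neg h1, if_neg h2]
  have hIici : Finset.Iic i = insert i (Finset.Iio i) := (Finset.Iio_insert i).symm
  have hgpos : ∀ j : Fin n, 0 < ‖gramSchmidtVecs b j‖ :=
    fun j => norm_pos_iff.mpr (gsv_ne_zero hb j)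
  set R : ℝ := (∏ j ∈ Finset.Iio i, ‖gramSchmidtVecs b j‖) *
    ∏ k ∈ Finset.univ.erase i, (∏ j ∈ Finset.Iic k, ‖gramSchmidtVecs b j‖) with hR_def
  have hR : 0 < R := by
    apply mul_pos
    · exact Finset.prod_pos fun j _ => hgpos j
    · exact Finset.prod_pos fun k _ => Finset.prod_pos fun j _ => hgpos j
  have hProdIic : ∀ k ∈ Finset.univ.erase i,
      (∏ j ∈ Finset.Iic k, ‖gramSchmidtVecs b' j‖)
        = ∏ j ∈ Finset.Iic k, ‖gramSchmidtVecs b j‖ := by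
    intro k hk
    have hki : k ≠ i := (Finset.mem_erase.mp hk).1
    rcases lt_or_gt_of_ne hki with h|h
    · exact Finset.prod_congr rfl fun j hj => by
        have hj' : j < i := lt_of_le_of_lt (Finset.mem_Iic.mp hj) h
        exact hnorm_other j (ne_of_lt hj') (ne_of_lt (hj'.trans hii1))
    · have hile : i1 ≤ k := by
        have := h
        simp only [Fin.lt_def, hi1def] at this ⊢
        simp only [Fin.le_def, hi1def]
        omega
      have hmi : i ∈ Finset.Iic k := Finset.mem_Iic.mpr (le_of_lt h)
      have hmi1 : i1 ∈ (Finset.Iic k).erase i :=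
        Finset.mem_erase.mpr ⟨hne.symm, Finset.mem_Iic.mpr hile⟩
      have hsplit : ∀ (F : Fin n → ℝ), ∏ j ∈ Finset.Iic k, F j
          = (F i * F i1) * ∏ j ∈ ((Finset.Iic k).erase i).erase i1, F j := by
        intro F
        rw [mul_assoc, Finset.mul_prod_erase _ F hmi1, Finset.mul_prod_erase _ F hmi]
      rw [hsplit, hsplit]
      have hrest : (∏ j ∈ ((Finset.Iic k).erase i).erase i1, ‖gramSchmidtVecs b' j‖)
          = ∏ j ∈ ((Finset.Iic k).erase i).erase i1, ‖gramSchmidtVecs b j‖ :=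
        Finset.prod_congr rfl fun j hj => by
          obtain ⟨hj1, hj2, _⟩ := by simpa [Finset.mem_erase] using hj
          exact hnorm_other j hj2 hj1
      rw [hrest, hnorm_pair, hu_def, hw_def]
  have hPot : basisPotential b = ‖u‖ * R := by
    unfold basisPotential
    rw [← Finset.mul_prod_erase Finset.univ _ (Finset.mem_univ i), hIici,
      Finset.prod_insert (by simp), hR_def, hu_def]
    ring
  have hPot' : basisPotential b' = ‖v‖ * R := by
    unfold basisPotential
    rw [← Finset.mul_prod_erase Finset.univ _ (Finset.mem_univ i), hIici,
      Finset.prod_insert (by simp), hnorm_i]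
    rw [show (∏ j ∈ Finset.Iio i, ‖gramSchmidtVecs b' j‖)
        = ∏ j ∈ Finset.Iio i, ‖gramSchmidtVecs b j‖ from
      Finset.prod_congr rfl fun j hj => by
        have hj' : j < i := Finset.mem_Iio.mp hj
        exact hnorm_other j (ne_of_lt hj') (ne_of_lt (hj'.trans hii1))]
    rw [Finset.prod_congr rfl hProdIic, hR_def]
    ring
  have hδ0 : (0:ℝ) < δ := lt_trans (by norm_num) hδ.1
  have hvlt : ‖v‖ < Real.sqrt δ * ‖u‖ := by
    have h1 : ‖v‖ = Real.sqrt (‖v‖^2) := (Real.sqrt_sq (norm_nonneg v)).symm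
    rw [h1]
    calc Real.sqrt (‖v‖^2) < Real.sqrt (δ * ‖u‖^2) :=
          Real.sqrt_lt_sqrt (sq_nonneg _) hlovasz
      _ = Real.sqrt δ * ‖u‖ := by
          rw [Real.sqrt_mul hδ0.le, Real.sqrt_sq (norm_nonneg u)]
  calc basisPotential b' = ‖v‖ * R := hPot'
    _ < (Real.sqrt δ * ‖u‖) * R := mul_lt_mul_of_pos_right hvlt hR
    _ = Real.sqrt δ * basisPotential b := by rw [hPot]; ring
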